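/- For positive C² functions ρ and P on ℝ³, with u = −(ℏ/(2m))∇ρ/ρ and P = (ℏ/2)∇·(ρu), the identity ρ∇(P/ρ) = ∇P + ∇·(ρₘu) u holds, where ρₘ = mρ. -/

import Mathlib

noncomputable section
open scoped BigOperators

/-- Physical space ℝ³. -/
abbrev Spc := Fin 3 → ℝ

/-- Partial derivative of a real-valued function in the `i`-th coordinate direction. -/
def pdR (i : Fin 3) (f : Spc → ℝ) (x : Spc) : ℝ := fderiv ℝ f x (Pi.single i 1)

/-- Divergence of a real vector field. -/
def divR (F : Spc → Fin 3 → ℝ) (x : Spc) : ℝ := ∑ i, pdR i (fun y => F y i) x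

lemma pdR_cmul (i : Fin 3) (c : ℝ) (f : Spc → ℝ) (x : Spc)
    (hf : DifferentiableAt ℝ f x) :
    pdR i (fun y => c * f y) x = c * pdR i f x := by
  simp [pdR, fderiv_const_mul hf]

lemma pdR_div (i : Fin 3) (f g : Spc → ℝ) (x : Spc) (hf : DifferentiableAt ℝ f x)
    (hg : DifferentiableAt ℝ g x) (h0 : g x ≠ 0) :
    pdR i (fun y => f y / g y) x = (pdR i f x * g x - f x * pdR i g x) / (g x)^2 := by
  have hinv : HasFDerivAt (fun y => (g y)⁻¹) ((-((g x) ^ 2)⁻¹) • fderiv ℝ g x) x :=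
    (hasDerivAt_inv h0).comp_hasFDerivAt x hg.hasFDerivAt
  have hmul := hf.hasFDerivAt.fun_mul hinv
  have heq : (fun y => f y / g y) = fun y => f y * (g y)⁻¹ := by
    funext y; rw [div_eq_mul_inv]
  rw [pdR, heq, hmul.fderiv]
  simp [pdR]
  field_simp
  ring

/-- with `u = −(ℏ/(2m))∇ρ/ρ` and `P = (ℏ/2)∇·(ρu)`, the identity
`ρ∇(P/ρ) = ∇P + ∇·(ρₘu)u` holds, where `ρₘ = mρ`. -/
theorem stmt15 (ℏ m : ℝ) (hℏ : 0 < ℏ) (hm : 0 < m)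
    (ρ : Spc → ℝ) (hρ : ContDiff ℝ 3 ρ) (hpos : ∀ x, 0 < ρ x)
    (u : Spc → Fin 3 → ℝ) (hu : ∀ x i, u x i = -(ℏ/(2*m)) * pdR i ρ x / ρ x)
    (P : Spc → ℝ) (hP : ∀ x, P x = (ℏ/2) * divR (fun y i => ρ y * u y i) x) :
    ∀ x i, ρ x * pdR i (fun y => P y / ρ y) x
      = pdR i P x + divR (fun y j => m * ρ y * u y j) x * u x i := by
  have hρ0 : ∀ y, ρ y ≠ 0 := fun y => (hpos y).ne'
  have hm0 : m ≠ 0 := hm.ne'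
  have hℏ0 : ℏ ≠ 0 := hℏ.ne'
  -- g j = ∂_j ρ is C²
  have hgC : ∀ j : Fin 3, ContDiff ℝ 2 (fun y => pdR j ρ y) := by
    intro j
    exact (hρ.fderiv_right (by norm_num)).clm_apply contDiff_const
  have hgd : ∀ (j : Fin 3) y, DifferentiableAt ℝ (fun y => pdR j ρ y) y :=
    fun j y => ((hgC j).differentiable (by norm_num)).differentiableAt
  -- second derivatives h j = ∂_j ∂_j ρ are C¹
  have hhC : ∀ j : Fin 3, ContDiff ℝ 1 (fun y => pdR j (fun z => pdR j ρ z) y) := by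
    intro j
    exact ((hgC j).fderiv_right (by norm_num)).clm_apply contDiff_const
  -- ρ u_j = -(ℏ/2m) ∂_j ρ
  have hFeq : ∀ j : Fin 3, (fun y => ρ y * u y j) = fun y => -(ℏ/(2*m)) * pdR j ρ y := by
    intro j; funext y; rw [hu, mul_comm, div_mul_cancel₀ _ (hρ0 y)]
  -- P as a function
  have hPeq : P = fun y => (ℏ/2) * ∑ j : Fin 3, (-(ℏ/(2*m)) * pdR j (fun z => pdR j ρ z) y) := by
    funext y
    rw [hP, divR]
    congr 1
    refine Finset.sum_congr rfl fun j _ => ?_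
    rw [hFeq j]
    exact pdR_cmul j _ _ y (hgd j y)
  intro x i
  have hPd : DifferentiableAt ℝ P x := by
    rw [hPeq]
    exact (DifferentiableAt.fun_sum fun j _ =>
      (((hhC j).differentiable (by norm_num)).differentiableAt).const_mul _).const_mul _
  have hρd : DifferentiableAt ℝ ρ x := (hρ.differentiable (by norm_num)).differentiableAt
  -- divergence of mρu
  have hdiv : divR (fun y j => m * ρ y * u y j) x
      = -(ℏ/2) * ∑ j : Fin 3, pdR j (fun z => pdR j ρ z) x := by
    rw [divR, Finset.mul_sum]
    refine Finset.sum_congr rfl fun j _ => ?_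
    have : (fun y => m * ρ y * u y j) = fun y => (-(ℏ/2)) * pdR j ρ y := by
      funext y
      have := congrFun (hFeq j) y
      rw [mul_assoc, this]
      field_simp
    rw [this, pdR_cmul j _ _ x (hgd j x)]
  -- partial derivative of P is everywhere, value of P at x:
  have hPx : P x = (ℏ/2) * ∑ j : Fin 3, (-(ℏ/(2*m)) * pdR j (fun z => pdR j ρ z) x) :=
    congrFun hPeq x
  rw [← Finset.mul_sum] at hPx
  set S := ∑ j : Fin 3, pdR j (fun z => pdR j ρ z) x with hS
  rw [pdR_div i P ρ x hPd hρd (hρ0 x), hdiv, hu, hPx]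
  have hρx := hρ0 x
  field_simp
  ring
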